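/- For every k ∈ X with ‖k‖ ≤ 1, it holds that φ⁺(x⁺_α + k − y⁻_α) ≥ (tρ/25)·(1/16 − v*(k)/ρ) − |e*(k + (ρ/4)v)| − |h*(k + (ρ/4)v)|. -/
import Mathlib


open Filter Topology Set

set_option maxHeartbeats 1000000 in
theorem statement5 {X : Type*} [NormedAddCommGroup X] [NormedSpace ℝ X] [CompleteSpace X]
    (ρ t : ℝ) (hρ0 : 0 < ρ) (hρ1 : ρ < 1 / 4) (ht0 : 0 < t) (ht1 : t < ρ / 16)
    (v e h : X) (hv : ‖v‖ = 1) (he : ‖e‖ = 1) (hh : ‖h‖ = 1)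
    (vs es hs : X →L[ℝ] ℝ) (hvs : ‖vs‖ = 1) (hes : ‖es‖ = 1) (hhs : ‖hs‖ = 1)
    (hvv : vs v = 1) (hee : es e = 1) (hhh : hs h = 1) (heh : |es h| < ρ / 800)
    (xp xm yp ym : X)
    (hxp : xp = (1 - ρ / 2) • e + t • h) (hxm : xm = (1 - ρ / 2) • e - t • h)
    (hyp : yp = xp + (ρ / 4) • v) (hym : ym = xm - (ρ / 4) • v)
    (lam : ℝ) (hlam : lam = 1 - ρ / 100)
    (phip phim : X →L[ℝ] ℝ)
    (hphip : phip = lam • es + (1 - lam) • (hs - (4 * t / ρ) • vs))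
    (hphim : phim = lam • es + (1 - lam) • (-hs + (4 * t / ρ) • vs))
    (k : X) (hk : ‖k‖ ≤ 1) :
    phip (xp + k - ym) ≥
      t * ρ / 25 * (1 / 16 - vs k / ρ) - |es (k + (ρ / 4) • v)| - |hs (k + (ρ / 4) • v)| := by
  have hw : xp + k - ym = (2*t) • h + (k + (ρ/4) • v) := by
    rw [hxp, hym, hxm]; module
  have hvh : |vs h| ≤ 1 := by
    calc |vs h| ≤ ‖vs‖ * ‖h‖ := vs.le_opNorm h
    _ = 1 := by rw [hvs, hh]; ring
  set A := es (k + (ρ / 4) • v) with hA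
  set B := hs (k + (ρ / 4) • v) with hB
  have hphipw : phip (xp + k - ym)
      = lam * (2*t * es h + A) + (1 - lam) * ((2*t + B)
        - (4*t/ρ) * (2*t * vs h + (vs k + ρ/4))) := by
    rw [hw, hphip]
    simp only [ContinuousLinearMap.add_apply, ContinuousLinearMap.smul_apply,
      ContinuousLinearMap.sub_apply, map_add, map_smul, hvv, hhh, smul_eq_mul, hA, hB]
    ring
  clear_value A B
  have e1 : lam * (2*t * es h + A) + (1 - lam) * ((2*t + B)
        - (4*t/ρ) * (2*t * vs h + (vs k + ρ/4)))
      = (1-ρ/100) * (2*t*es h) + (1-ρ/100) * A + t*ρ/50 + (ρ/100) * B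
        - (2*t^2/25) * vs h - (t/25) * vs k - t*ρ/100 := by
    rw [hlam]; field_simp; ring
  have e2 : t * ρ / 25 * (1 / 16 - vs k / ρ) = t*ρ/400 - (t/25) * vs k := by
    field_simp; ring
  rw [hphipw, e1, e2]
  have heh1 : es h ≥ -(ρ/800) := by
    have := abs_le.mp heh.le; linarith [this.1]
  have hvh2 := (abs_le.mp hvh).2
  have hc0 : (0:ℝ) ≤ 1 - ρ/100 := by linarith
  have hb1 : (1-ρ/100) * (2*t*es h) ≥ -(t*ρ/400) := by
    nlinarith [mul_le_mul_of_nonneg_left heh1 (by positivity : (0:ℝ) ≤ (1-ρ/100)*(2*t)),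
      mul_pos ht0 hρ0]
  have hb2 : (1-ρ/100) * A ≥ -|A| := by
    nlinarith [mul_nonneg hc0 (by linarith [neg_abs_le A] : (0:ℝ) ≤ A + |A|),
      mul_nonneg (by linarith : (0:ℝ) ≤ ρ/100) (abs_nonneg A)]
  have hb3 : (ρ/100) * B ≥ -|B| := by
    nlinarith [mul_nonneg (by linarith : (0:ℝ) ≤ ρ/100) (by linarith [neg_abs_le B] : (0:ℝ) ≤ B + |B|),
      mul_nonneg (by linarith : (0:ℝ) ≤ 1 - ρ/100) (abs_nonneg B)]
  have hb4 : (2*t^2/25) * vs h ≤ t*ρ/200 := by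
    calc (2*t^2/25) * vs h ≤ (2*t^2/25) * 1 :=
          mul_le_mul_of_nonneg_left hvh2 (by positivity)
      _ = 2*(t*t)/25 := by ring
      _ ≤ 2*(t*(ρ/16))/25 := by
          have h2 : t*t ≤ t*(ρ/16) := mul_le_mul_of_nonneg_left ht1.le ht0.le
          linarith
      _ = t*ρ/200 := by ring
  linarith
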